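/- Let u ∈ C²((a,∞)) with u''∈C¹ solve ρu = bu' + (σ²/2)u'' + f on (a,∞), under: σ > 0, b concave and C¹, f ∈ C¹ with f' > 0 strictly decreasing, ρ > sup b'. If liminf_{x→∞} u'(x) ≤ 0, then u' is strictly quasiconcave on (a,∞); in particular u' attains the value c₀ > 0 at most twice, and if u'(s) = u'(S) = c₀ with s < S, then u' > c₀ on (s,S). -/
import Mathlib

open Set Filter Topology

/-- If `g` has negative derivative at `c` and `g c = 0`, then `g < 0` just to the right. -/
lemma aux_deriv_neg_right {g : ℝ → ℝ} {d c : ℝ} (hg : HasDerivAt g d c) (hd : d < 0)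
    (h0 : g c = 0) : ∀ᶠ t in 𝓝[>] c, g t < 0 := by
  have ht : Tendsto (slope g c) (𝓝[>] c) (𝓝 d) :=
    (hasDerivAt_iff_tendsto_slope.mp hg).mono_left
      (nhdsWithin_mono c fun t htt => ne_of_gt htt)
  have h2 : ∀ᶠ t in 𝓝[>] c, slope g c t < 0 := ht.eventually_lt_const hd
  filter_upwards [h2, self_mem_nhdsWithin] with t ht2 ht3
  rw [slope_def_field, h0, sub_zero] at ht2
  rcases div_neg_iff.mp ht2 with ⟨_, h⟩ | ⟨h, _⟩
  · exfalso; exact absurd (sub_pos.2 ht3) (not_lt.2 h.le)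
  · exact h

/-- If `g` has positive derivative at `c` and `g c = 0`, then `g > 0` just to the right. -/
lemma aux_deriv_pos_right {g : ℝ → ℝ} {d c : ℝ} (hg : HasDerivAt g d c) (hd : 0 < d)
    (h0 : g c = 0) : ∀ᶠ t in 𝓝[>] c, 0 < g t := by
  have ht : Tendsto (slope g c) (𝓝[>] c) (𝓝 d) :=
    (hasDerivAt_iff_tendsto_slope.mp hg).mono_left
      (nhdsWithin_mono c fun t htt => ne_of_gt htt)
  have h2 : ∀ᶠ t in 𝓝[>] c, 0 < slope g c t := ht.eventually_const_lt hd
  filter_upwards [h2, self_mem_nhdsWithin] with t ht2 ht3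
  rw [slope_def_field, h0, sub_zero] at ht2
  rcases div_pos_iff.mp ht2 with ⟨h, _⟩ | ⟨_, h⟩
  · exact h
  · exfalso; exact absurd (sub_pos.2 ht3) (not_lt.2 h.le)

/-- The derivative of a concave function on `Ioi 0` is antitone. -/
lemma aux_concave_deriv_anti {b b' : ℝ → ℝ} (hbconc : ConcaveOn ℝ (Set.Ioi (0:ℝ)) b)
    (hb : ∀ x > (0:ℝ), HasDerivAt b (b' x) x) {x y : ℝ} (hx : 0 < x) (hxy : x < y) :
    b' y ≤ b' x := by
  have hy : 0 < y := hx.trans hxy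
  have hneg : ConvexOn ℝ (Set.Ioi (0:ℝ)) (-b) := hbconc.neg
  have h1 : (b y - b x) / (y - x) ≤ b' x := by
    have ht : Tendsto (slope b x) (𝓝[>] x) (𝓝 (b' x)) :=
      (hasDerivAt_iff_tendsto_slope.mp (hb x hx)).mono_left
        (nhdsWithin_mono x fun t htt => ne_of_gt htt)
    refine ge_of_tendsto ht ?_
    filter_upwards [self_mem_nhdsWithin, mem_nhdsWithin_of_mem_nhds (Iio_mem_nhds hxy)]
      with t ht1 ht2
    have ht1' : x < t := ht1
    have ht2' : t < y := ht2
    have h := hneg.secant_mono (a := x) (x := t) (y := y) (Set.mem_Ioi.2 hx)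
      (Set.mem_Ioi.2 (hx.trans ht1')) (Set.mem_Ioi.2 hy) (ne_of_gt ht1') (ne_of_gt hxy)
      (le_of_lt ht2')
    simp only [Pi.neg_apply] at h
    rw [slope_def_field]
    have hne1 : t - x ≠ 0 := sub_ne_zero.2 (ne_of_gt ht1')
    have hne2 : y - x ≠ 0 := sub_ne_zero.2 (ne_of_gt hxy)
    have e1 : (-b t - -b x) / (t - x) = -((b t - b x) / (t - x)) := by field_simp; ring
    have e2 : (-b y - -b x) / (y - x) = -((b y - b x) / (y - x)) := by field_simp; ring
    rw [e1, e2] at h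
    linarith
  have h2 : b' y ≤ (b y - b x) / (y - x) := by
    have ht : Tendsto (slope b y) (𝓝[<] y) (𝓝 (b' y)) :=
      (hasDerivAt_iff_tendsto_slope.mp (hb y hy)).mono_left
        (nhdsWithin_mono y fun t htt => ne_of_lt htt)
    refine le_of_tendsto ht ?_
    filter_upwards [self_mem_nhdsWithin, mem_nhdsWithin_of_mem_nhds (Ioi_mem_nhds hxy)]
      with t ht1 ht2
    have ht1' : t < y := ht1
    have ht2' : x < t := ht2
    have h := hneg.secant_mono (a := y) (x := x) (y := t) (Set.mem_Ioi.2 hy)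
      (Set.mem_Ioi.2 hx) (Set.mem_Ioi.2 (hx.trans ht2')) (ne_of_lt hxy) (ne_of_lt ht1')
      (le_of_lt ht2')
    simp only [Pi.neg_apply] at h
    rw [slope_def_field]
    have hne1 : y - x ≠ 0 := sub_ne_zero.2 (ne_of_gt hxy)
    have hne2 : x - y ≠ 0 := sub_ne_zero.2 (ne_of_lt hxy)
    have hne3 : t - y ≠ 0 := sub_ne_zero.2 (ne_of_lt ht1')
    have hne4 : y - t ≠ 0 := sub_ne_zero.2 (ne_of_gt ht1')
    have e1 : (-b x - -b y) / (x - y) = -((b y - b x) / (y - x)) := by field_simp; ring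
    have e2 : (-b t - -b y) / (t - y) = -((b t - b y) / (t - y)) := by field_simp; ring
    rw [e1, e2] at h
    linarith
  linarith

/-- At an interior minimum of `u'`, the differentiated ODE forces `(ρ - b') u' ≥ f'`. -/
lemma aux_key_min (a ρ : ℝ) (ha : 0 ≤ a)
    (b b' σ f f' u u' u'' : ℝ → ℝ)
    (hb : ∀ x > (0:ℝ), HasDerivAt b (b' x) x)
    (hσpos : ∀ x > (0:ℝ), 0 < σ x)
    (hf : ∀ x > (0:ℝ), HasDerivAt f (f' x) x)
    (hu : ∀ x ∈ Set.Ioi a, HasDerivAt u (u' x) x)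
    (hu' : ∀ x ∈ Set.Ioi a, HasDerivAt u' (u'' x) x)
    (hode : ∀ x ∈ Set.Ioi a, ρ * u x = b x * u' x + (1 / 2) * (σ x) ^ 2 * u'' x + f x)
    {p q c : ℝ} (hp : a < p) (hc : c ∈ Set.Ioo p q)
    (hmin : ∀ t ∈ Set.Icc p q, u' c ≤ u' t) :
    f' c ≤ (ρ - b' c) * u' c := by
  by_contra hcon
  push_neg at hcon
  have hca : a < c := hp.trans hc.1
  have hc0 : (0:ℝ) < c := lt_of_le_of_lt ha hca
  have hloc : IsLocalMin u' c := Filter.eventually_of_mem (Icc_mem_nhds hc.1 hc.2) hmin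
  have h2 : u'' c = 0 := hloc.hasDerivAt_eq_zero (hu' c hca)
  set g : ℝ → ℝ := fun t => ρ * u t - b t * u' t - f t with hgdef
  have hgc : g c = 0 := by
    have h3 := hode c hca
    rw [h2] at h3
    simp only [hgdef]
    nlinarith [h3]
  have hgd : HasDerivAt g (ρ * u' c - (b' c * u' c + b c * u'' c) - f' c) c :=
    (((hu c hca).const_mul ρ).sub ((hb c hc0).mul (hu' c hca))).sub (hf c hc0)
  have hd : ρ * u' c - (b' c * u' c + b c * u'' c) - f' c < 0 := by
    rw [h2]; nlinarith [hcon]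
  have hev := aux_deriv_neg_right hgd hd hgc
  have hq : ∀ᶠ t in 𝓝[>] c, t < q :=
    mem_nhdsWithin_of_mem_nhds (Iio_mem_nhds hc.2)
  obtain ⟨r, hr, hsub⟩ := mem_nhdsGT_iff_exists_Ioo_subset.mp (hev.and hq)
  have hrc : c < r := hr
  set t₀ : ℝ := (c + min r q) / 2 with ht₀def
  have hcmin' : c < min r q := lt_min hrc hc.2
  have hct₀ : c < t₀ := by rw [ht₀def]; linarith
  have ht₀r : t₀ < min r q := by rw [ht₀def]; linarith
  have hanti : StrictAntiOn u' (Icc c t₀) := by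
    apply strictAntiOn_of_deriv_neg (convex_Icc c t₀)
    · exact fun t htt => (hu' t (lt_of_lt_of_le hca htt.1)).continuousAt.continuousWithinAt
    · intro t htt
      rw [interior_Icc] at htt
      have hta : a < t := hca.trans htt.1
      have h5 : g t < 0 ∧ t < q :=
        hsub ⟨htt.1, lt_of_lt_of_le (htt.2.trans ht₀r) (min_le_left r q)⟩
      have h6 : g t = 1 / 2 * σ t ^ 2 * u'' t := by
        have := hode t hta
        simp only [hgdef]
        linarith
      have h7 : 0 < σ t := hσpos t (lt_of_le_of_lt ha hta)
      rw [(hu' t hta).deriv]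
      have h9 : 1 / 2 * σ t ^ 2 * u'' t < 0 := by rw [← h6]; exact h5.1
      rcases mul_neg_iff.mp h9 with ⟨_, h10⟩ | ⟨h10, _⟩
      · exact h10
      · nlinarith [pow_pos h7 2]
  have hlt : u' t₀ < u' c :=
    hanti (left_mem_Icc.2 hct₀.le) (right_mem_Icc.2 hct₀.le) hct₀
  have hle : u' c ≤ u' t₀ :=
    hmin t₀ ⟨hc.1.le.trans hct₀.le, (ht₀r.trans_le (min_le_right r q)).le⟩
  linarith

/-- At an interior maximum of `u'`, the differentiated ODE forces `(ρ - b') u' ≤ f'`. -/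
lemma aux_key_max (a ρ : ℝ) (ha : 0 ≤ a)
    (b b' σ f f' u u' u'' : ℝ → ℝ)
    (hb : ∀ x > (0:ℝ), HasDerivAt b (b' x) x)
    (hσpos : ∀ x > (0:ℝ), 0 < σ x)
    (hf : ∀ x > (0:ℝ), HasDerivAt f (f' x) x)
    (hu : ∀ x ∈ Set.Ioi a, HasDerivAt u (u' x) x)
    (hu' : ∀ x ∈ Set.Ioi a, HasDerivAt u' (u'' x) x)
    (hode : ∀ x ∈ Set.Ioi a, ρ * u x = b x * u' x + (1 / 2) * (σ x) ^ 2 * u'' x + f x)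
    {p q c : ℝ} (hp : a < p) (hc : c ∈ Set.Ioo p q)
    (hmax : ∀ t ∈ Set.Icc p q, u' t ≤ u' c) :
    (ρ - b' c) * u' c ≤ f' c := by
  by_contra hcon
  push_neg at hcon
  have hca : a < c := hp.trans hc.1
  have hc0 : (0:ℝ) < c := lt_of_le_of_lt ha hca
  have hloc : IsLocalMax u' c := Filter.eventually_of_mem (Icc_mem_nhds hc.1 hc.2) hmax
  have h2 : u'' c = 0 := hloc.hasDerivAt_eq_zero (hu' c hca)
  set g : ℝ → ℝ := fun t => ρ * u t - b t * u' t - f t with hgdef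
  have hgc : g c = 0 := by
    have h3 := hode c hca
    rw [h2] at h3
    simp only [hgdef]
    nlinarith [h3]
  have hgd : HasDerivAt g (ρ * u' c - (b' c * u' c + b c * u'' c) - f' c) c :=
    (((hu c hca).const_mul ρ).sub ((hb c hc0).mul (hu' c hca))).sub (hf c hc0)
  have hd : 0 < ρ * u' c - (b' c * u' c + b c * u'' c) - f' c := by
    rw [h2]; nlinarith [hcon]
  have hev := aux_deriv_pos_right hgd hd hgc
  have hq : ∀ᶠ t in 𝓝[>] c, t < q :=
    mem_nhdsWithin_of_mem_nhds (Iio_mem_nhds hc.2)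
  obtain ⟨r, hr, hsub⟩ := mem_nhdsGT_iff_exists_Ioo_subset.mp (hev.and hq)
  have hrc : c < r := hr
  set t₀ : ℝ := (c + min r q) / 2 with ht₀def
  have hcmin' : c < min r q := lt_min hrc hc.2
  have hct₀ : c < t₀ := by rw [ht₀def]; linarith
  have ht₀r : t₀ < min r q := by rw [ht₀def]; linarith
  have hmono : StrictMonoOn u' (Icc c t₀) := by
    apply strictMonoOn_of_deriv_pos (convex_Icc c t₀)
    · exact fun t htt => (hu' t (lt_of_lt_of_le hca htt.1)).continuousAt.continuousWithinAt
    · intro t htt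
      rw [interior_Icc] at htt
      have hta : a < t := hca.trans htt.1
      have h5 : 0 < g t ∧ t < q :=
        hsub ⟨htt.1, lt_of_lt_of_le (htt.2.trans ht₀r) (min_le_left r q)⟩
      have h6 : g t = 1 / 2 * σ t ^ 2 * u'' t := by
        have := hode t hta
        simp only [hgdef]
        linarith
      have h7 : 0 < σ t := hσpos t (lt_of_le_of_lt ha hta)
      rw [(hu' t hta).deriv]
      have h9 : 0 < 1 / 2 * σ t ^ 2 * u'' t := by rw [← h6]; exact h5.1
      rcases mul_pos_iff.mp h9 with ⟨_, h10⟩ | ⟨_, h10⟩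
      · exact h10
      · nlinarith [pow_pos h7 2]
  have hlt : u' c < u' t₀ :=
    hmono (left_mem_Icc.2 hct₀.le) (right_mem_Icc.2 hct₀.le) hct₀
  have hle : u' t₀ ≤ u' c :=
    hmax t₀ ⟨hc.1.le.trans hct₀.le, (ht₀r.trans_le (min_le_right r q)).le⟩
  linarith

theorem stmt_13 (a ρ c₀ : ℝ) (ha : 0 ≤ a) (hρ : 0 < ρ) (hc₀ : 0 < c₀)
    (b b' σ f f' : ℝ → ℝ)
    (hb : ∀ x > (0:ℝ), HasDerivAt b (b' x) x)
    (hbconc : ConcaveOn ℝ (Set.Ioi (0:ℝ)) b)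
    (hσpos : ∀ x > (0:ℝ), 0 < σ x)
    (hf : ∀ x > (0:ℝ), HasDerivAt f (f' x) x)
    (hf'pos : ∀ x > (0:ℝ), 0 < f' x)
    (hf'anti : StrictAntiOn f' (Set.Ioi (0:ℝ)))
    (hρb : ∀ x > (0:ℝ), b' x < ρ)
    (u u' u'' u''' : ℝ → ℝ)
    (hu : ∀ x ∈ Set.Ioi a, HasDerivAt u (u' x) x)
    (hu' : ∀ x ∈ Set.Ioi a, HasDerivAt u' (u'' x) x)
    (hu'' : ∀ x ∈ Set.Ioi a, HasDerivAt u'' (u''' x) x)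
    (hode : ∀ x ∈ Set.Ioi a,
      ρ * u x = b x * u' x + (1 / 2) * (σ x) ^ 2 * u'' x + f x)
    (hliminf : ∀ ε > (0:ℝ), ∀ xbar : ℝ, ∃ x ≥ xbar, x ∈ Set.Ioi a ∧ u' x ≤ ε) :
    (∀ x ∈ Set.Ioi a, ∀ y ∈ Set.Ioi a, ∀ z, x < z → z < y →
        min (u' x) (u' y) < u' z) ∧
    (∀ x ∈ Set.Ioi a, ∀ y ∈ Set.Ioi a, ∀ z ∈ Set.Ioi a,
        x < y → y < z → u' x = c₀ → u' y = c₀ → u' z = c₀ → False) ∧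
    (∀ s ∈ Set.Ioi a, ∀ S ∈ Set.Ioi a, s < S → u' s = c₀ → u' S = c₀ →
        ∀ z ∈ Set.Ioo s S, c₀ < u' z) := by
  have hcont : ∀ p q : ℝ, a < p → ContinuousOn u' (Icc p q) := fun p q hp t htt =>
    (hu' t (lt_of_lt_of_le hp htt.1)).continuousAt.continuousWithinAt
  have P1 : ∀ x ∈ Set.Ioi a, ∀ y ∈ Set.Ioi a, ∀ z, x < z → z < y →
      min (u' x) (u' y) < u' z := by
    intro x hx y hy z hxz hzy
    by_contra hcon
    push_neg at hcon
    have hax : a < x := hx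
    have hxy : x < y := hxz.trans hzy
    -- interior minimum point on [x, y]
    obtain ⟨z₀, hz₀mem, hz₀min'⟩ :=
      isCompact_Icc.exists_isMinOn (nonempty_Icc.2 hxy.le) (hcont x y hax)
    have hz₀min := isMinOn_iff.mp hz₀min'
    obtain ⟨c, hcmem, hcmin⟩ : ∃ c ∈ Ioo x y, ∀ t ∈ Icc x y, u' c ≤ u' t := by
      rcases eq_or_lt_of_le hz₀mem.1 with h | h
      · refine ⟨z, ⟨hxz, hzy⟩, fun t htt => ?_⟩
        calc u' z ≤ u' x := hcon.trans (min_le_left _ _)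
        _ = u' z₀ := by rw [h]
        _ ≤ u' t := hz₀min t htt
      · rcases eq_or_lt_of_le hz₀mem.2 with h2 | h2
        · refine ⟨z, ⟨hxz, hzy⟩, fun t htt => ?_⟩
          calc u' z ≤ u' y := hcon.trans (min_le_right _ _)
          _ = u' z₀ := by rw [← h2]
          _ ≤ u' t := hz₀min t htt
        · exact ⟨z₀, ⟨h, h2⟩, fun t htt => hz₀min t htt⟩
    have hac : a < c := hax.trans hcmem.1
    have hc0 : (0:ℝ) < c := lt_of_le_of_lt ha hac
    have hA : f' c ≤ (ρ - b' c) * u' c :=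
      aux_key_min a ρ ha b b' σ f f' u u' u'' hb hσpos hf hu hu' hode hax hcmem hcmin
    have hm_pos : 0 < u' c := by
      nlinarith [hf'pos c hc0, sub_pos.2 (hρb c hc0), hA]
    -- point far to the right where u' is small
    obtain ⟨x', hx'ge, hx'a, hx'le⟩ := hliminf (u' c / 2) (by positivity) y
    have hyIcc : y ∈ Icc x y := ⟨hxy.le, le_refl y⟩
    have hmy : u' c ≤ u' y := hcmin y hyIcc
    have hyx' : y < x' := by
      rcases eq_or_lt_of_le hx'ge with h | h
      · exfalso; rw [← h] at hx'le; linarith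
      · exact h
    have hcx' : c < x' := hcmem.2.trans hyx'
    -- interior maximum point on [c, x']
    obtain ⟨z₁, hz₁mem, hz₁max'⟩ :=
      isCompact_Icc.exists_isMaxOn (nonempty_Icc.2 hcx'.le) (hcont c x' hac)
    have hz₁max := isMaxOn_iff.mp hz₁max'
    have hyIcc2 : y ∈ Icc c x' := ⟨hcmem.2.le, hx'ge⟩
    have hMy : u' y ≤ u' z₁ := hz₁max y hyIcc2
    have hz₁x' : z₁ < x' := by
      rcases eq_or_lt_of_le hz₁mem.2 with h | h
      · exfalso; rw [h] at hMy; linarith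
      · exact h
    obtain ⟨c₁, hc₁mem, hc₁max, hc₁ge⟩ :
        ∃ c₁ ∈ Ioo c x', (∀ t ∈ Icc c x', u' t ≤ u' c₁) ∧ u' c ≤ u' c₁ := by
      rcases eq_or_lt_of_le hz₁mem.1 with h | h
      · refine ⟨y, ⟨hcmem.2, hyx'⟩, fun t htt => ?_, hmy⟩
        calc u' t ≤ u' z₁ := hz₁max t htt
        _ = u' c := by rw [← h]
        _ ≤ u' y := hmy
      · exact ⟨z₁, ⟨h, hz₁x'⟩, fun t htt => hz₁max t htt, hmy.trans hMy⟩
    have hc₁0 : (0:ℝ) < c₁ := lt_of_le_of_lt ha (hac.trans hc₁mem.1)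
    have hB : (ρ - b' c₁) * u' c₁ ≤ f' c₁ :=
      aux_key_max a ρ ha b b' σ f f' u u' u'' hb hσpos hf hu hu' hode hac hc₁mem hc₁max
    have hf'lt : f' c₁ < f' c := hf'anti (Set.mem_Ioi.2 hc0) (Set.mem_Ioi.2 hc₁0) hc₁mem.1
    have hb'le : b' c₁ ≤ b' c := aux_concave_deriv_anti hbconc hb hc0 hc₁mem.1
    have h1 : 0 < ρ - b' c₁ := sub_pos.2 (hρb c₁ hc₁0)
    nlinarith [mul_nonneg (sub_nonneg.2 hb'le) hm_pos.le,
      mul_nonneg h1.le (sub_nonneg.2 hc₁ge), hA, hB, hf'lt]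
  refine ⟨P1, ?_, ?_⟩
  · intro x hx y hy z hz hxy hyz h1 h2 h3
    have := P1 x hx z hz y hxy hyz
    rw [h1, h2, h3] at this
    simp at this
  · intro s hs S hS hsS h1 h2 z hz
    have := P1 s hs S hS z hz.1 hz.2
    rwa [h1, h2, min_self] at this
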